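/- Let S be the set of pairs (f, (p,q)) where f is an integer-matrix binary quartic form over ℤ and (p,q) ∈ ℤ² with f(p,q) = 1. Declare (f, (p,q)) ∼ (f′, (p′,q′)) if there exists g ∈ SL₂(ℤ) with f′(X,Y) = f((X,Y)·g) and (p,q) = (p′,q′)·g; this is an equivalence relation on S. Then the map sending (c,d,e) ∈ ℤ³ to the equivalence class of (X⁴ + 6cX²Y² + 4dXY³ + eY⁴, (1,0)) is a bijection from ℤ³ onto S/∼. Furthermore, this map restricts to a bijection from {(c,d,e) ∈ ℤ³ : 2 ∣ d and e ≡ c² (mod 4)} onto the set of classes of pairs (f,(p,q)) ∈ S with 48 ∣ I(f) and 1728 ∣ J(f). -/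

import Mathlib

/-- A binary quartic form `aX⁴ + bX³Y + cX²Y² + dXY³ + eY⁴` over `ℤ`, encoded by its
coefficient tuple `(a, b, c, d, e)`. -/
abbrev BQ : Type := ℤ × ℤ × ℤ × ℤ × ℤ

/-- Evaluation of a binary quartic form at `(x, y)`. -/
def evalBQ (f : BQ) (x y : ℤ) : ℤ :=
  f.1 * x ^ 4 + f.2.1 * x ^ 3 * y + f.2.2.1 * x ^ 2 * y ^ 2 +
    f.2.2.2.1 * x * y ^ 3 + f.2.2.2.2 * y ^ 4

/-- A binary quartic form over `ℤ` is integer-matrix if `4 ∣ b`, `6 ∣ c` and `4 ∣ d`. -/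
def IsIntegerMatrixBQ (f : BQ) : Prop :=
  4 ∣ f.2.1 ∧ 6 ∣ f.2.2.1 ∧ 4 ∣ f.2.2.2.1

/-- The invariant `I = 12ae − 3bd + c²` of a binary quartic form over `ℤ`. -/
def IBQ (f : BQ) : ℤ :=
  12 * f.1 * f.2.2.2.2 - 3 * f.2.1 * f.2.2.2.1 + f.2.2.1 ^ 2

/-- The invariant `J = 72ace − 27ad² − 27b²e + 9bcd − 2c³` of a binary quartic over `ℤ`. -/
def JBQ (f : BQ) : ℤ :=
  72 * f.1 * f.2.2.1 * f.2.2.2.2 - 27 * f.1 * f.2.2.2.1 ^ 2 - 27 * f.2.1 ^ 2 * f.2.2.2.2 +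
    9 * f.2.1 * f.2.2.1 * f.2.2.2.1 - 2 * f.2.2.1 ^ 3

/-- The set `S` of pairs `(f, (p,q))` with `f` an integer-matrix binary quartic form and
`f(p,q) = 1`. -/
def Spairs : Set (BQ × (ℤ × ℤ)) :=
  {x | IsIntegerMatrixBQ x.1 ∧ evalBQ x.1 x.2.1 x.2.2 = 1}

/-- `(f,(p,q)) ∼ (f′,(p′,q′))` iff there is `g = (α β; γ δ) ∈ SL₂(ℤ)` with
`f′(X,Y) = f((X,Y)·g) = f(αX + γY, βX + δY)` and `(p,q) = (p′,q′)·g`. -/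
def relBQ (x x' : BQ × (ℤ × ℤ)) : Prop :=
  ∃ g : Matrix (Fin 2) (Fin 2) ℤ, g.det = 1 ∧
    (∀ X Y : ℤ, evalBQ x'.1 X Y = evalBQ x.1 (g 0 0 * X + g 1 0 * Y) (g 0 1 * X + g 1 1 * Y)) ∧
    x.2.1 = g 0 0 * x'.2.1 + g 1 0 * x'.2.2 ∧
    x.2.2 = g 0 1 * x'.2.1 + g 1 1 * x'.2.2

/-- The map `(c,d,e) ↦ (X⁴ + 6cX²Y² + 4dXY³ + eY⁴, (1,0))`. -/
def PhiBQ (t : ℤ × ℤ × ℤ) : BQ × (ℤ × ℤ) :=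
  ((1, 0, 6 * t.1, 4 * t.2.1, t.2.2), (1, 0))

/-- `∼` is an equivalence relation on `S`, and `(c,d,e) ↦ [(X⁴ + 6cX²Y² + 4dXY³ + eY⁴, (1,0))]`
is a bijection from `ℤ³` onto `S/∼`; furthermore it restricts to a bijection from
`{(c,d,e) : 2 ∣ d, e ≡ c² (mod 4)}` onto the classes of pairs with `48 ∣ I(f)` and
`1728 ∣ J(f)`. -/
lemma relBQ_refl (x : BQ × (ℤ × ℤ)) : relBQ x x := by
  refine ⟨!![1,0;0,1], by rw [Matrix.det_fin_two_of]; ring, fun X Y => ?_, ?_, ?_⟩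
  · show evalBQ x.1 X Y = evalBQ x.1 (1 * X + 0 * Y) (0 * X + 1 * Y)
    ring_nf
  · show x.2.1 = 1 * x.2.1 + 0 * x.2.2; ring
  · show x.2.2 = 0 * x.2.1 + 1 * x.2.2; ring

lemma relBQ_symm {x y : BQ × (ℤ × ℤ)} (h : relBQ x y) : relBQ y x := by
  obtain ⟨g, hdet, hev, hp, hq⟩ := h
  rw [Matrix.det_fin_two] at hdet
  refine ⟨!![g 1 1, -(g 0 1); -(g 1 0), g 0 0], ?_, fun X Y => ?_, ?_, ?_⟩
  · rw [Matrix.det_fin_two_of]; linear_combination hdet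
  · have h := hev (g 1 1 * X + -(g 1 0) * Y) (-(g 0 1) * X + g 0 0 * Y)
    rw [show g 0 0 * (g 1 1 * X + -(g 1 0) * Y) + g 1 0 * (-(g 0 1) * X + g 0 0 * Y)
          = (g 0 0 * g 1 1 - g 0 1 * g 1 0) * X + 0 by ring,
        show g 0 1 * (g 1 1 * X + -(g 1 0) * Y) + g 1 1 * (-(g 0 1) * X + g 0 0 * Y)
          = (g 0 0 * g 1 1 - g 0 1 * g 1 0) * Y + 0 by ring, hdet, one_mul, one_mul,
        add_zero, add_zero] at h
    show evalBQ x.1 X Y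
        = evalBQ y.1 (g 1 1 * X + -(g 1 0) * Y) (-(g 0 1) * X + g 0 0 * Y)
    exact h.symm
  · show y.2.1 = g 1 1 * x.2.1 + -(g 1 0) * x.2.2
    linear_combination (-(g 1 1)) * hp + g 1 0 * hq + (-(y.2.1)) * hdet
  · show y.2.2 = -(g 0 1) * x.2.1 + g 0 0 * x.2.2
    linear_combination g 0 1 * hp + (-(g 0 0)) * hq + (-(y.2.2)) * hdet

lemma relBQ_trans {x y z : BQ × (ℤ × ℤ)} (hxy : relBQ x y) (hyz : relBQ y z) : relBQ x z := by
  obtain ⟨g, hg, hevg, hgp, hgq⟩ := hxy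
  obtain ⟨h, hh, hevh, hhp, hhq⟩ := hyz
  refine ⟨h * g, by rw [Matrix.det_mul, hh, hg]; ring, fun X Y => ?_, ?_, ?_⟩
  · have e1 : (h * g) 0 0 * X + (h * g) 1 0 * Y
        = g 0 0 * (h 0 0 * X + h 1 0 * Y) + g 1 0 * (h 0 1 * X + h 1 1 * Y) := by
      simp [Matrix.mul_apply, Fin.sum_univ_two]; ring
    have e2 : (h * g) 0 1 * X + (h * g) 1 1 * Y
        = g 0 1 * (h 0 0 * X + h 1 0 * Y) + g 1 1 * (h 0 1 * X + h 1 1 * Y) := by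
      simp [Matrix.mul_apply, Fin.sum_univ_two]; ring
    rw [e1, e2, hevh]
    exact hevg _ _
  · have e00 : (h * g) 0 0 = h 0 0 * g 0 0 + h 0 1 * g 1 0 := by
      simp [Matrix.mul_apply, Fin.sum_univ_two]
    have e10 : (h * g) 1 0 = h 1 0 * g 0 0 + h 1 1 * g 1 0 := by
      simp [Matrix.mul_apply, Fin.sum_univ_two]
    rw [e00, e10]
    linear_combination hgp + g 0 0 * hhp + g 1 0 * hhq
  · have e01 : (h * g) 0 1 = h 0 0 * g 0 1 + h 0 1 * g 1 1 := by
      simp [Matrix.mul_apply, Fin.sum_univ_two]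
    have e11 : (h * g) 1 1 = h 1 0 * g 0 1 + h 1 1 * g 1 1 := by
      simp [Matrix.mul_apply, Fin.sum_univ_two]
    rw [e01, e11]
    linear_combination hgq + g 0 1 * hhp + g 1 1 * hhq

lemma key_aux (a B C D e p q r s A₁ B₁ C₁ D₁ E₁ : ℤ)
    (hA1 : A₁ = a*p^4 + 4*B*p^3*q + 6*C*p^2*q^2 + 4*D*p*q^3 + e*q^4)
    (hB1 : B₁ = a*p^3*r + B*(p^3*s + 3*p^2*q*r) + 3*C*(p^2*q*s + p*q^2*r)
        + D*(3*p*q^2*s + q^3*r) + e*q^3*s)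
    (hC1 : C₁ = a*p^2*r^2 + 2*B*(p^2*r*s + p*q*r^2) + C*(p^2*s^2 + 4*p*q*r*s + q^2*r^2)
        + 2*D*(p*q*s^2 + q^2*r*s) + e*q^2*s^2)
    (hD1 : D₁ = a*p*r^3 + B*(3*p*r^2*s + q*r^3) + 3*C*(p*r*s^2 + q*r^2*s)
        + D*(p*s^3 + 3*q*r*s^2) + e*q*s^3)
    (hE1 : E₁ = a*r^4 + 4*B*r^3*s + 6*C*r^2*s^2 + 4*D*r*s^3 + e*s^4)
    (hdet : p*s - q*r = 1) (hA : A₁ = 1) (hB0 : B₁ = 0) :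
    relBQ ((a, 4*B, 6*C, 4*D, e), (p, q)) (PhiBQ (C₁, D₁, E₁)) ∧
    IBQ (PhiBQ (C₁, D₁, E₁)).1 = IBQ (a, 4*B, 6*C, 4*D, e) ∧
    JBQ (PhiBQ (C₁, D₁, E₁)).1 = JBQ (a, 4*B, 6*C, 4*D, e) := by
  have hev' : ∀ X Y : ℤ, A₁*X^4 + 4*B₁*X^3*Y + 6*C₁*X^2*Y^2 + 4*D₁*X*Y^3 + E₁*Y^4
      = evalBQ (a, 4*B, 6*C, 4*D, e) (p*X + r*Y) (q*X + s*Y) := by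
    intro X Y
    rw [hA1, hB1, hC1, hD1, hE1]
    show _ = a * (p*X + r*Y) ^ 4 + 4*B * (p*X + r*Y) ^ 3 * (q*X + s*Y)
        + 6*C * (p*X + r*Y) ^ 2 * (q*X + s*Y) ^ 2 + 4*D * (p*X + r*Y) * (q*X + s*Y) ^ 3
        + e * (q*X + s*Y) ^ 4
    ring
  refine ⟨⟨!![p, q; r, s], by rw [Matrix.det_fin_two_of]; linear_combination hdet,
      fun X Y => ?_, ?_, ?_⟩, ?_, ?_⟩
  · have h := hev' X Y
    rw [hA, hB0] at h
    show evalBQ (1, 0, 6*C₁, 4*D₁, E₁) X Y = evalBQ (a, 4*B, 6*C, 4*D, e) (p*X + r*Y) (q*X + s*Y)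
    rw [← h]
    show (1:ℤ) * X^4 + 0 * X^3 * Y + 6*C₁ * X^2 * Y^2 + 4*D₁ * X * Y^3 + E₁ * Y^4 = _
    ring
  · show (p:ℤ) = p * 1 + r * 0; ring
  · show (q:ℤ) = q * 1 + s * 0; ring
  · have hgI : 12*A₁*E₁ - 48*B₁*D₁ + 36*C₁^2
        = (p*s - q*r)^4 * (12*a*e - 48*B*D + 36*C^2) := by
      rw [hA1, hB1, hC1, hD1, hE1]; ring
    rw [hA, hB0, hdet] at hgI
    show 12 * 1 * E₁ - 3 * 0 * (4*D₁) + (6*C₁)^2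
        = 12 * a * e - 3 * (4*B) * (4*D) + (6*C)^2
    linear_combination hgI
  · have hgJ : 72*A₁*(6*C₁)*E₁ - 27*A₁*(4*D₁)^2 - 27*(4*B₁)^2*E₁ + 9*(4*B₁)*(6*C₁)*(4*D₁)
        - 2*(6*C₁)^3
        = (p*s - q*r)^6 * (72*a*(6*C)*e - 27*a*(4*D)^2 - 27*(4*B)^2*e + 9*(4*B)*(6*C)*(4*D)
        - 2*(6*C)^3) := by
      rw [hA1, hB1, hC1, hD1, hE1]; ring
    rw [hA, hB0, hdet] at hgJ
    show 72 * 1 * (6*C₁) * E₁ - 27 * 1 * (4*D₁)^2 - 27 * 0^2 * E₁ + 9 * 0 * (6*C₁) * (4*D₁)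
        - 2 * (6*C₁)^3
        = 72 * a * (6*C) * e - 27 * a * (4*D)^2 - 27 * (4*B)^2 * e + 9 * (4*B) * (6*C) * (4*D)
        - 2 * (6*C)^3
    linear_combination hgJ

lemma keyBQ (x : BQ × (ℤ × ℤ)) (hx : x ∈ Spairs) :
    ∃ t : ℤ × ℤ × ℤ, relBQ x (PhiBQ t) ∧ IBQ (PhiBQ t).1 = IBQ x.1 ∧
      JBQ (PhiBQ t).1 = JBQ x.1 := by
  obtain ⟨⟨a, b, c, d, e⟩, p, q⟩ := x
  obtain ⟨⟨⟨B, rfl⟩, ⟨C, rfl⟩, ⟨D, rfl⟩⟩, hev⟩ := hx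
  have hA : a*p^4 + 4*B*p^3*q + 6*C*p^2*q^2 + 4*D*p*q^3 + e*q^4 = 1 := by
    have h := hev
    show _ = (1:ℤ)
    rw [← h]
    show _ = a * p ^ 4 + 4*B * p ^ 3 * q + 6*C * p ^ 2 * q ^ 2 + 4*D * p * q ^ 3 + e * q ^ 4
    ring
  have hdvd : (Int.gcd p q : ℤ) ∣ 1 := by
    rw [← hA, show a*p^4 + 4*B*p^3*q + 6*C*p^2*q^2 + 4*D*p*q^3 + e*q^4
      = p*(a*p^3 + 4*B*p^2*q + 6*C*p*q^2 + 4*D*q^3) + q*(e*q^3) by ring]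
    exact dvd_add ((Int.gcd_dvd_left p q).mul_right _) ((Int.gcd_dvd_right p q).mul_right _)
  have hgcd : Int.gcd p q = 1 := by
    have h1 := Int.isUnit_iff.mp (isUnit_of_dvd_one hdvd)
    have h2 : (0:ℤ) ≤ (Int.gcd p q : ℤ) := Int.natCast_nonneg _
    omega
  obtain ⟨u, v, huv⟩ := Int.isCoprime_iff_gcd_eq_one.mpr hgcd
  set β := a*p^3*(-v) + B*(p^3*u + 3*p^2*q*(-v)) + 3*C*(p^2*q*u + p*q^2*(-v))
      + D*(3*p*q^2*u + q^3*(-v)) + e*q^3*u with hβ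
  set r := -v - β*p with hr
  set s := u - β*q with hs
  have hdet : p*s - q*r = 1 := by rw [hr, hs]; linear_combination huv
  have hB0 : a*p^3*r + B*(p^3*s + 3*p^2*q*r) + 3*C*(p^2*q*s + p*q^2*r)
      + D*(3*p*q^2*s + q^3*r) + e*q^3*s = 0 := by
    rw [hr, hs]
    linear_combination -hβ - β*hA
  exact ⟨_, key_aux a B C D e p q r s _ _ _ _ _ rfl rfl rfl rfl rfl hdet hA hB0⟩

lemma phiBQ_inj (t t' : ℤ × ℤ × ℤ) (h : relBQ (PhiBQ t) (PhiBQ t')) : t = t' := by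
  obtain ⟨c, d, e⟩ := t
  obtain ⟨c', d', e'⟩ := t'
  obtain ⟨g, hdet, hev, hp, hq⟩ := h
  have h00 : g 0 0 = 1 := by
    have := hp; simp only [PhiBQ] at this; omega
  have h01 : g 0 1 = 0 := by
    have := hq; simp only [PhiBQ] at this; omega
  rw [Matrix.det_fin_two, h00, h01] at hdet
  have h11 : g 1 1 = 1 := by linarith
  simp only [PhiBQ, evalBQ, h00, h01, h11] at hev
  have hγ : g 1 0 = 0 := by
    have h1 := hev 1 1
    have h2 := hev (-1) 1
    have h3 := hev 2 1
    have h4 := hev (-2) 1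
    have : (48:ℤ) * g 1 0 = 0 := by linear_combination -h3 + h4 + 2*h1 - 2*h2
    linarith
  have h0 := hev 0 1
  have h1 := hev 1 1
  have h2 := hev (-1) 1
  rw [hγ] at h0 h1 h2
  norm_num at h0 h1 h2
  have he : e = e' := by linarith
  have hd : d = d' := by linarith
  have hc : c = c' := by linarith
  rw [hc, hd, he]

theorem bq_rep_one_bijection :
    Equivalence (fun a b : ↥Spairs => relBQ a.1 b.1) ∧
    (∀ t : ℤ × ℤ × ℤ, PhiBQ t ∈ Spairs) ∧
    (∀ t t' : ℤ × ℤ × ℤ, relBQ (PhiBQ t) (PhiBQ t') → t = t') ∧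
    (∀ x ∈ Spairs, ∃ t : ℤ × ℤ × ℤ, relBQ x (PhiBQ t)) ∧
    (∀ t : ℤ × ℤ × ℤ, 2 ∣ t.2.1 → t.2.2 ≡ t.1 ^ 2 [ZMOD 4] →
      48 ∣ IBQ (PhiBQ t).1 ∧ 1728 ∣ JBQ (PhiBQ t).1) ∧
    (∀ x ∈ Spairs, 48 ∣ IBQ x.1 → 1728 ∣ JBQ x.1 →
      ∃ t : ℤ × ℤ × ℤ, (2 ∣ t.2.1 ∧ t.2.2 ≡ t.1 ^ 2 [ZMOD 4]) ∧ relBQ x (PhiBQ t)) := by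
  refine ⟨⟨fun a => relBQ_refl a.1, fun h => relBQ_symm h, fun h h' => relBQ_trans h h'⟩,
    ?_, fun t t' h => phiBQ_inj t t' h, ?_, ?_, ?_⟩
  · intro t
    refine ⟨⟨⟨0, rfl⟩, ⟨t.1, rfl⟩, ⟨t.2.1, rfl⟩⟩, ?_⟩
    show (1:ℤ) * 1 ^ 4 + 0 * 1 ^ 3 * 0 + 6 * t.1 * 1 ^ 2 * 0 ^ 2 + 4 * t.2.1 * 1 * 0 ^ 3
        + t.2.2 * 0 ^ 4 = 1
    ring
  · intro x hx
    obtain ⟨t, ht, -, -⟩ := keyBQ x hx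
    exact ⟨t, ht⟩
  · rintro ⟨c, d, e⟩ hd2 hmod
    obtain ⟨m, hm⟩ : (2:ℤ) ∣ d := hd2
    have hk : (4:ℤ) ∣ c^2 - e := Int.ModEq.dvd hmod
    obtain ⟨k, hk⟩ := hk
    constructor
    · refine ⟨c^2 - k, ?_⟩
      show 12 * 1 * e - 3 * 0 * (4*d) + (6*c)^2 = 48 * (c^2 - k)
      linear_combination -12*hk
    · refine ⟨-(c*k) - m^2, ?_⟩
      show 72 * 1 * (6*c) * e - 27 * 1 * (4*d)^2 - 27 * 0^2 * e + 9 * 0 * (6*c) * (4*d)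
          - 2 * (6*c)^3 = 1728 * (-(c*k) - m^2)
      linear_combination (-432*c)*hk - 432*(d + 2*m)*hm
  · intro x hx hI hJ
    obtain ⟨⟨c1, d1, e1⟩, hrel, hIv, hJv⟩ := keyBQ x hx
    have hIv' : (12:ℤ)*e1 + 36*c1^2 = IBQ x.1 := by
      rw [← hIv]
      show (12:ℤ)*e1 + 36*c1^2 = 12 * 1 * e1 - 3 * 0 * (4*d1) + (6*c1)^2
      ring
    have hJv' : (432:ℤ)*c1*e1 - 432*d1^2 - 432*c1^3 = JBQ x.1 := by
      rw [← hJv]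
      show _ = 72 * 1 * (6*c1) * e1 - 27 * 1 * (4*d1)^2 - 27 * 0^2 * e1
          + 9 * 0 * (6*c1) * (4*d1) - 2 * (6*c1)^3
      ring
    rw [← hIv'] at hI
    rw [← hJv'] at hJ
    obtain ⟨k, hk⟩ := hI
    obtain ⟨m, hm⟩ := hJ
    have he1 : e1 = 4*k - 3*c1^2 := by linarith
    have hd2 : d1^2 = 4*(c1*k - c1^3 - m) := by
      have : 432*c1*(4*k - 3*c1^2) - 432*d1^2 - 432*c1^3 = 1728*m := by rw [← he1]; linarith
      linarith
    have hdd : (2:ℤ) ∣ d1 := by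
      have h2 : (2:ℤ) ∣ d1^2 := dvd_trans ⟨2, by norm_num⟩ ⟨c1*k - c1^3 - m, hd2⟩
      exact Int.prime_two.dvd_of_dvd_pow h2
    refine ⟨(c1, d1, e1), ⟨hdd, ?_⟩, hrel⟩
    rw [Int.modEq_iff_dvd]
    exact ⟨c1^2 - k, by linarith⟩
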